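/- Setting the partial derivatives of the BiRank regularization function R(u,p) to zero yields exactly the BiRank update equations: p_j = (1/(1+γ)) Σ_i (w_{ij}/(√d_i √d_j)) u_i + (γ/(1+γ)) p_j^0 and u_i = (1/(1+η)) Σ_j (w_{ij}/(√d_i √d_j)) p_j + (η/(1+η)) u_i^0; under the substitution γ = (1-α)/α, η = (1-β)/β these coincide with the BiRank iteration with parameters α, β. -/

import Mathlib

open Finset

lemma birank_aux_iff {ι : Type*} [Fintype ι] (c b : ι → ℝ) (s : ℝ) (hs : 0 < s)
    (hsum : ∑ i, c i = s ^ 2) (κ q0 C x : ℝ) (hκ : 0 < 1 + κ) :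
    (deriv (fun t => (∑ i, c i * (t / s - b i) ^ 2) + κ * (t - q0) ^ 2 + C) x = 0 ↔
      x = (1 / (1 + κ)) * (∑ i, c i * b i / s) + (κ / (1 + κ)) * q0) := by
  have hs0 : s ≠ 0 := hs.ne'
  have hd : HasDerivAt (fun t => (∑ i, c i * (t / s - b i) ^ 2) + κ * (t - q0) ^ 2 + C)
      ((∑ i, c i * (2 * (x / s - b i) * (1 / s))) + κ * (2 * (x - q0))) x := by
    apply HasDerivAt.add_const
    apply HasDerivAt.add
    · apply HasDerivAt.fun_sum
      intro i _
      have h := ((((hasDerivAt_id x).div_const s).sub_const (b i)).pow 2).const_mul (c i)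
      exact h.congr_deriv (by rw [show (2:ℕ) - 1 = 1 from rfl]; simp only [id, pow_one]; push_cast; ring)
    · have h := (((hasDerivAt_id x).sub_const q0).pow 2).const_mul κ
      exact h.congr_deriv (by rw [show (2:ℕ) - 1 = 1 from rfl]; simp only [id, pow_one]; push_cast; ring)
  rw [hd.deriv]
  have e : (∑ i, c i * (2 * (x / s - b i) * (1 / s))) = 2 * x - (2 / s) * ∑ i, c i * b i := by
    rw [Finset.sum_congr rfl (fun i _ => show c i * (2 * (x / s - b i) * (1 / s))
        = (2 * x / s ^ 2) * c i - (2 / s) * (c i * b i) by ring),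
      Finset.sum_sub_distrib, ← Finset.mul_sum, ← Finset.mul_sum, hsum]
    field_simp
  rw [e, ← Finset.sum_div]
  have hκ0 : (1 + κ) ≠ 0 := hκ.ne'
  set S := (∑ i, c i * b i) / s with hS
  rw [show (2 / s * ∑ i, c i * b i) = 2 * S by rw [hS]; ring]
  constructor
  · intro h
    have hx : x * (1 + κ) = S + κ * q0 := by linear_combination h / 2
    field_simp
    linear_combination hx
  · intro h
    rw [h]
    field_simp
    ring

/-- Setting the partial derivatives of the BiRank regularization function to zero
yields exactly the BiRank update equations, and under the substitutions
`γ = (1-α)/α`, `η = (1-β)/β` these coincide with the BiRank iteration with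
parameters `α, β`. -/
theorem stmt_13 {m n : Type*} [Fintype m] [Fintype n] [DecidableEq m] [DecidableEq n]
    (w : m → n → ℝ) (hw : ∀ i j, 0 ≤ w i j)
    (du : m → ℝ) (hdu : ∀ i, du i = ∑ j, w i j) (hdu_pos : ∀ i, 0 < du i)
    (dp : n → ℝ) (hdp : ∀ j, dp j = ∑ i, w i j) (hdp_pos : ∀ j, 0 < dp j)
    (α β : ℝ) (hα : α ∈ Set.Ioo (0:ℝ) 1) (hβ : β ∈ Set.Ioo (0:ℝ) 1)
    (γ η : ℝ) (hγ : γ = (1 - α) / α) (hη : η = (1 - β) / β)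
    (p0 : n → ℝ) (u0 : m → ℝ)
    (R : (m → ℝ) → (n → ℝ) → ℝ)
    (hR : ∀ (u : m → ℝ) (p : n → ℝ),
      R u p = (∑ j, ∑ i, w i j *
                (p j / Real.sqrt (dp j) - u i / Real.sqrt (du i)) ^ 2)
           + γ * ∑ j, (p j - p0 j) ^ 2
           + η * ∑ i, (u i - u0 i) ^ 2)
    (u : m → ℝ) (p : n → ℝ) :
    (∀ j : n,
      (deriv (fun t => R u (Function.update p j t)) (p j) = 0 ↔
        p j = (1 / (1 + γ)) *
                (∑ i, w i j / (Real.sqrt (du i) * Real.sqrt (dp j)) * u i)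
              + (γ / (1 + γ)) * p0 j) ∧
      ((1 / (1 + γ)) * (∑ i, w i j / (Real.sqrt (du i) * Real.sqrt (dp j)) * u i)
         + (γ / (1 + γ)) * p0 j
       = α * (∑ i, w i j / (Real.sqrt (du i) * Real.sqrt (dp j)) * u i)
         + (1 - α) * p0 j)) ∧
    (∀ i : m,
      (deriv (fun t => R (Function.update u i t) p) (u i) = 0 ↔
        u i = (1 / (1 + η)) *
                (∑ j, w i j / (Real.sqrt (du i) * Real.sqrt (dp j)) * p j)
              + (η / (1 + η)) * u0 i) ∧
      ((1 / (1 + η)) * (∑ j, w i j / (Real.sqrt (du i) * Real.sqrt (dp j)) * p j)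
         + (η / (1 + η)) * u0 i
       = β * (∑ j, w i j / (Real.sqrt (du i) * Real.sqrt (dp j)) * p j)
         + (1 - β) * u0 i)) := by
  obtain ⟨hα0, hα1⟩ := hα
  obtain ⟨hβ0, hβ1⟩ := hβ
  have hγpos : 0 < 1 + γ := by
    have : 0 ≤ γ := by rw [hγ]; exact div_nonneg (by linarith) hα0.le
    linarith
  have hηpos : 0 < 1 + η := by
    have : 0 ≤ η := by rw [hη]; exact div_nonneg (by linarith) hβ0.le
    linarith
  have h1γ : 1 + γ = 1 / α := by rw [hγ]; field_simp; ring
  have h1η : 1 + η = 1 / β := by rw [hη]; field_simp; ring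
  have ealg_p : ∀ (A q : ℝ), (1 / (1 + γ)) * A + (γ / (1 + γ)) * q
      = α * A + (1 - α) * q := by
    intro A q
    rw [h1γ, hγ]
    field_simp
  have ealg_u : ∀ (A q : ℝ), (1 / (1 + η)) * A + (η / (1 + η)) * q
      = β * A + (1 - β) * q := by
    intro A q
    rw [h1η, hη]
    field_simp
  constructor
  · intro j
    refine ⟨?_, ealg_p _ _⟩
    set s := Real.sqrt (dp j) with hsdef
    have hs : 0 < s := Real.sqrt_pos.2 (hdp_pos j)
    have hsum : ∑ i, w i j = s ^ 2 := by
      rw [hsdef, Real.sq_sqrt (hdp_pos j).le, hdp j]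
    have hfun : (fun t => R u (Function.update p j t))
        = fun t => (∑ i, w i j * (t / s - u i / Real.sqrt (du i)) ^ 2)
            + γ * (t - p0 j) ^ 2
            + ((∑ j' ∈ Finset.univ.erase j, ∑ i, w i j' *
                  (p j' / Real.sqrt (dp j') - u i / Real.sqrt (du i)) ^ 2)
               + γ * (∑ j' ∈ Finset.univ.erase j, (p j' - p0 j') ^ 2)
               + η * ∑ i, (u i - u0 i) ^ 2) := by
      funext t
      rw [hR]
      rw [← Finset.add_sum_erase Finset.univ
          (fun j' => ∑ i, w i j' * (Function.update p j t j' / Real.sqrt (dp j')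
            - u i / Real.sqrt (du i)) ^ 2) (Finset.mem_univ j),
        ← Finset.add_sum_erase Finset.univ
          (fun j' => (Function.update p j t j' - p0 j') ^ 2) (Finset.mem_univ j)]
      simp only [Function.update_self]
      have e1 : (∑ j' ∈ Finset.univ.erase j, ∑ i, w i j' *
            (Function.update p j t j' / Real.sqrt (dp j') - u i / Real.sqrt (du i)) ^ 2)
          = ∑ j' ∈ Finset.univ.erase j, ∑ i, w i j' *
            (p j' / Real.sqrt (dp j') - u i / Real.sqrt (du i)) ^ 2 :=
        Finset.sum_congr rfl fun j' hj' => by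
          rw [Function.update_of_ne (Finset.ne_of_mem_erase hj')]
      have e2 : (∑ j' ∈ Finset.univ.erase j, (Function.update p j t j' - p0 j') ^ 2)
          = ∑ j' ∈ Finset.univ.erase j, (p j' - p0 j') ^ 2 :=
        Finset.sum_congr rfl fun j' hj' => by
          rw [Function.update_of_ne (Finset.ne_of_mem_erase hj')]
      rw [e1, e2]
      ring
    rw [hfun]
    have h1 := birank_aux_iff (fun i => w i j) (fun i => u i / Real.sqrt (du i)) s hs
      hsum γ (p0 j)
      ((∑ j' ∈ Finset.univ.erase j, ∑ i, w i j' *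
          (p j' / Real.sqrt (dp j') - u i / Real.sqrt (du i)) ^ 2)
        + γ * (∑ j' ∈ Finset.univ.erase j, (p j' - p0 j') ^ 2)
        + η * ∑ i, (u i - u0 i) ^ 2) (p j) hγpos
    rw [h1]
    have esum : (∑ i, w i j * (u i / Real.sqrt (du i)) / s)
        = ∑ i, w i j / (Real.sqrt (du i) * s) * u i :=
      Finset.sum_congr rfl fun i _ => by ring
    rw [esum]
  · intro i
    refine ⟨?_, ealg_u _ _⟩
    set s := Real.sqrt (du i) with hsdef
    have hs : 0 < s := Real.sqrt_pos.2 (hdu_pos i)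
    have hsum : ∑ j, w i j = s ^ 2 := by
      rw [hsdef, Real.sq_sqrt (hdu_pos i).le, hdu i]
    have hfun : (fun t => R (Function.update u i t) p)
        = fun t => (∑ j, w i j * (t / s - p j / Real.sqrt (dp j)) ^ 2)
            + η * (t - u0 i) ^ 2
            + ((∑ i' ∈ Finset.univ.erase i, ∑ j, w i' j *
                  (p j / Real.sqrt (dp j) - u i' / Real.sqrt (du i')) ^ 2)
               + γ * (∑ j, (p j - p0 j) ^ 2)
               + η * ∑ i' ∈ Finset.univ.erase i, (u i' - u0 i') ^ 2) := by
      funext t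
      rw [hR]
      rw [Finset.sum_comm]
      rw [← Finset.add_sum_erase Finset.univ
          (fun i' => ∑ j, w i' j * (p j / Real.sqrt (dp j)
            - Function.update u i t i' / Real.sqrt (du i')) ^ 2) (Finset.mem_univ i),
        ← Finset.add_sum_erase Finset.univ
          (fun i' => (Function.update u i t i' - u0 i') ^ 2) (Finset.mem_univ i)]
      simp only [Function.update_self]
      have e1 : (∑ i' ∈ Finset.univ.erase i, ∑ j, w i' j * (p j / Real.sqrt (dp j)
            - Function.update u i t i' / Real.sqrt (du i')) ^ 2)
          = ∑ i' ∈ Finset.univ.erase i, ∑ j, w i' j *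
            (p j / Real.sqrt (dp j) - u i' / Real.sqrt (du i')) ^ 2 :=
        Finset.sum_congr rfl fun i' hi' => by
          rw [Function.update_of_ne (Finset.ne_of_mem_erase hi')]
      have e2 : (∑ i' ∈ Finset.univ.erase i, (Function.update u i t i' - u0 i') ^ 2)
          = ∑ i' ∈ Finset.univ.erase i, (u i' - u0 i') ^ 2 :=
        Finset.sum_congr rfl fun i' hi' => by
          rw [Function.update_of_ne (Finset.ne_of_mem_erase hi')]
      have e3 : (∑ j, w i j * (p j / Real.sqrt (dp j) - t / s) ^ 2)
          = ∑ j, w i j * (t / s - p j / Real.sqrt (dp j)) ^ 2 :=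
        Finset.sum_congr rfl fun j _ => by ring
      rw [e1, e2, e3]
      ring
    rw [hfun]
    have h1 := birank_aux_iff (fun j => w i j) (fun j => p j / Real.sqrt (dp j)) s hs
      hsum η (u0 i)
      ((∑ i' ∈ Finset.univ.erase i, ∑ j, w i' j *
          (p j / Real.sqrt (dp j) - u i' / Real.sqrt (du i')) ^ 2)
        + γ * (∑ j, (p j - p0 j) ^ 2)
        + η * ∑ i' ∈ Finset.univ.erase i, (u i' - u0 i') ^ 2) (u i) hηpos
    rw [h1]
    have esum : (∑ j, w i j * (p j / Real.sqrt (dp j)) / s)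
        = ∑ j, w i j / (s * Real.sqrt (dp j)) * p j :=
      Finset.sum_congr rfl fun j _ => by ring
    rw [esum]
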